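/- Fix reals S_A>0, θ≥0, λ>0, V∈(0,1], an integer B≥1, and a real S_M≥0. Define, for ζ∈(0,1), g(ζ) := Σ_{r=0}^{B} binom(B,r)·ρ(ζ)^r·(1−ρ(ζ))^{B−r}·ν̂(V, r·S_A·S_M/(S_A+S_M))·(r − ρ(ζ)·B)/(ρ(ζ)·(1−ρ(ζ))) + λ·B·(e^{ζ}/(1−ζ))·(1+θ·S_M). Then g is strictly increasing on (0,1). -/

import Mathlib

open Finset

noncomputable def bern (n : ℕ) (a : ℕ → ℝ) (p : ℝ) : ℝ :=
  ∑ r ∈ range (n + 1), (n.choose r : ℝ) * p ^ r * (1 - p) ^ (n - r) * a r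

lemma key_sum (n : ℕ) (a : ℕ → ℝ) (p : ℝ) :
    ∑ r ∈ range (n + 1 + 1), ((n + 1).choose r : ℝ) * a r *
        ((r : ℝ) * p ^ (r - 1) * (1 - p) ^ (n + 1 - r)
          - ((n + 1 - r : ℕ) : ℝ) * p ^ r * (1 - p) ^ (n + 1 - r - 1))
      = ((n : ℝ) + 1) * bern n (fun r => a (r + 1) - a r) p := by
  have h1 : ∑ r ∈ range (n + 1 + 1),
      ((n + 1).choose r : ℝ) * a r * ((r : ℝ) * p ^ (r - 1) * (1 - p) ^ (n + 1 - r))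
      = ((n : ℝ) + 1) * ∑ r ∈ range (n + 1),
          (n.choose r : ℝ) * p ^ r * (1 - p) ^ (n - r) * a (r + 1) := by
    rw [Finset.sum_range_succ']
    simp only [Nat.cast_zero, zero_mul, mul_zero, add_zero]
    rw [Finset.mul_sum]
    refine Finset.sum_congr rfl fun r hr => ?_
    have hc : (((n + 1).choose (r + 1) : ℕ) : ℝ) * ((r : ℝ) + 1)
        = ((n : ℝ) + 1) * ((n.choose r : ℕ) : ℝ) := by
      have h := Nat.add_one_mul_choose_eq n r
      have : ((n.succ * n.choose r : ℕ) : ℝ) = ((n.succ.choose r.succ * r.succ : ℕ) : ℝ) := by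
        exact_mod_cast congrArg (Nat.cast (R := ℝ)) h
      push_cast at this
      linarith
    have he1 : r + 1 - 1 = r := rfl
    have he2 : n + 1 - (r + 1) = n - r := by omega
    rw [he1, he2]
    push_cast
    linear_combination (a (r + 1) * p ^ r * (1 - p) ^ (n - r)) * hc
  have h2 : ∑ r ∈ range (n + 1 + 1),
      ((n + 1).choose r : ℝ) * a r * (((n + 1 - r : ℕ) : ℝ) * p ^ r * (1 - p) ^ (n + 1 - r - 1))
      = ((n : ℝ) + 1) * ∑ r ∈ range (n + 1),
          (n.choose r : ℝ) * p ^ r * (1 - p) ^ (n - r) * a r := by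
    rw [Finset.sum_range_succ]
    have hz : n + 1 - (n + 1) = 0 := by omega
    rw [hz]
    simp only [Nat.cast_zero, zero_mul, mul_zero, add_zero]
    rw [Finset.mul_sum]
    refine Finset.sum_congr rfl fun r hr => ?_
    have hrn : r ≤ n := by
      have := Finset.mem_range.mp hr; omega
    have hc : (((n + 1).choose r : ℕ) : ℝ) * ((n + 1 - r : ℕ) : ℝ)
        = ((n : ℝ) + 1) * ((n.choose r : ℕ) : ℝ) := by
      have h1' := Nat.choose_succ_right_eq (n + 1) r
      have h2' := Nat.add_one_mul_choose_eq n r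
      have : (n + 1).choose r * (n + 1 - r) = (n + 1) * n.choose r := by
        rw [← h1', h2']
      exact_mod_cast congrArg (Nat.cast (R := ℝ)) this
    have he2 : n + 1 - r - 1 = n - r := by omega
    rw [he2]
    linear_combination (a r * p ^ r * (1 - p) ^ (n - r)) * hc
  calc ∑ r ∈ range (n + 1 + 1), ((n + 1).choose r : ℝ) * a r *
        ((r : ℝ) * p ^ (r - 1) * (1 - p) ^ (n + 1 - r)
          - ((n + 1 - r : ℕ) : ℝ) * p ^ r * (1 - p) ^ (n + 1 - r - 1))
      = (∑ r ∈ range (n + 1 + 1),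
          ((n + 1).choose r : ℝ) * a r * ((r : ℝ) * p ^ (r - 1) * (1 - p) ^ (n + 1 - r)))
        - ∑ r ∈ range (n + 1 + 1),
          ((n + 1).choose r : ℝ) * a r * (((n + 1 - r : ℕ) : ℝ) * p ^ r * (1 - p) ^ (n + 1 - r - 1)) := by
        rw [← Finset.sum_sub_distrib]
        exact Finset.sum_congr rfl fun r _ => by ring
    _ = ((n : ℝ) + 1) * bern n (fun r => a (r + 1) - a r) p := by
        rw [h1, h2, bern, ← mul_sub, ← Finset.sum_sub_distrib]
        congr 1
        exact Finset.sum_congr rfl fun r _ => by ring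

lemma bern_hasDerivAt (n : ℕ) (a : ℕ → ℝ) (p : ℝ) :
    HasDerivAt (bern (n + 1) a)
      (((n : ℝ) + 1) * bern n (fun r => a (r + 1) - a r) p) p := by
  have hterm : ∀ r ∈ range (n + 1 + 1),
      HasDerivAt (fun q : ℝ => ((n + 1).choose r : ℝ) * q ^ r * (1 - q) ^ (n + 1 - r) * a r)
        (((n + 1).choose r : ℝ) * a r *
          ((r : ℝ) * p ^ (r - 1) * (1 - p) ^ (n + 1 - r)
            - ((n + 1 - r : ℕ) : ℝ) * p ^ r * (1 - p) ^ (n + 1 - r - 1))) p := by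
    intro r hr
    have h1 : HasDerivAt (fun q : ℝ => ((n + 1).choose r : ℝ) * q ^ r)
        (((n + 1).choose r : ℝ) * ((r : ℝ) * p ^ (r - 1))) p :=
      (hasDerivAt_pow r p).const_mul _
    have h0 : HasDerivAt (fun q : ℝ => 1 - q) (-1 : ℝ) p := by
      simpa using (hasDerivAt_id p).const_sub 1
    have h2 : HasDerivAt (fun q : ℝ => (1 - q) ^ (n + 1 - r))
        (((n + 1 - r : ℕ) : ℝ) * (1 - p) ^ (n + 1 - r - 1) * (-1)) p := h0.pow _
    have := (h1.fun_mul h2).mul_const (a r)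
    refine this.congr_deriv ?_
    ring
  have hsum := HasDerivAt.fun_sum hterm
  rw [key_sum] at hsum
  exact hsum

lemma term_eq (m r : ℕ) (hr : r ≤ m + 1) (C A p : ℝ) (hp0 : p ≠ 0) (hp1 : 1 - p ≠ 0) :
    C * p ^ r * (1 - p) ^ (m + 1 - r) * A * (((r : ℝ) - p * ((m + 1 : ℕ) : ℝ)) / (p * (1 - p)))
      = C * A * ((r : ℝ) * p ^ (r - 1) * (1 - p) ^ (m + 1 - r)
          - ((m + 1 - r : ℕ) : ℝ) * p ^ r * (1 - p) ^ (m + 1 - r - 1)) := by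
  rcases r with _ | s
  · -- r = 0
    have he1 : m + 1 - 0 = m + 1 := rfl
    have he2 : m + 1 - 1 = m := rfl
    rw [he1, he2]
    push_cast
    rw [pow_succ]
    field_simp
    ring
  · rcases Nat.lt_or_ge s m with hlt | hge
    · -- s + 1 ≤ m
      obtain ⟨t, rfl⟩ : ∃ t, m = s + 1 + t := ⟨m - s - 1, by omega⟩
      have he1 : s + 1 + t + 1 - (s + 1) = t + 1 := by omega
      have he2 : t + 1 - 1 = t := rfl
      have he3 : s + 1 - 1 = s := rfl
      rw [he1, he2, he3]
      push_cast
      rw [pow_succ p s, pow_succ (1 - p) t]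
      field_simp
      ring
    · -- s = m  (since s + 1 ≤ m + 1 and s ≥ m)
      have hsm : s = m := by omega
      subst hsm
      have he1 : s + 1 - (s + 1) = 0 := by omega
      have he2 : 0 - 1 = 0 := rfl
      have he3 : s + 1 - 1 = s := rfl
      rw [he1, he2, he3]
      push_cast
      rw [pow_succ p s]
      field_simp
      ring

lemma sum_eq (m : ℕ) (a : ℕ → ℝ) (p : ℝ) (hp0 : p ≠ 0) (hp1 : 1 - p ≠ 0) :
    ∑ r ∈ range (m + 1 + 1), ((m + 1).choose r : ℝ) * p ^ r * (1 - p) ^ (m + 1 - r) * a r *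
        (((r : ℝ) - p * ((m + 1 : ℕ) : ℝ)) / (p * (1 - p)))
      = ((m : ℝ) + 1) * bern m (fun r => a (r + 1) - a r) p := by
  rw [← key_sum]
  refine Finset.sum_congr rfl fun r hr => ?_
  exact term_eq m r (by have := Finset.mem_range.mp hr; omega) _ (a r) p hp0 hp1

lemma bern_mono (n : ℕ) (b : ℕ → ℝ) (hb : ∀ r, b r ≤ b (r + 1)) :
    MonotoneOn (bern n b) (Set.Icc (0 : ℝ) 1) := by
  rcases n with _ | k
  · have : bern 0 b = fun _ => b 0 := by
      funext p; simp [bern]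
    rw [this]
    exact monotoneOn_const
  · refine monotoneOn_of_deriv_nonneg (convex_Icc 0 1)
      (fun x _ => (bern_hasDerivAt k b x).continuousAt.continuousWithinAt)
      (fun x _ => (bern_hasDerivAt k b x).differentiableAt.differentiableWithinAt)
      (fun x hx => ?_)
    rw [interior_Icc] at hx
    rw [(bern_hasDerivAt k b x).deriv]
    refine mul_nonneg (by positivity) (Finset.sum_nonneg fun r _ => ?_)
    have h1 : (0:ℝ) ≤ (k.choose r : ℝ) := by positivity
    have h2 : (0:ℝ) ≤ x ^ r := le_of_lt (pow_pos hx.1 r)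
    have h3 : (0:ℝ) ≤ (1 - x) ^ (k - r) := le_of_lt (pow_pos (by linarith [hx.2]) _)
    have h4 : (0:ℝ) ≤ b (r + 1) - b r := sub_nonneg.2 (hb r)
    exact mul_nonneg (mul_nonneg (mul_nonneg h1 h2) h3) h4

lemma rho_mono : MonotoneOn (fun z : ℝ => z * Real.exp (-z)) (Set.Icc (0 : ℝ) 1) := by
  have hder : ∀ x : ℝ, HasDerivAt (fun z : ℝ => z * Real.exp (-z))
      (Real.exp (-x) * (1 - x)) x := by
    intro x
    have hexp : HasDerivAt (fun z : ℝ => Real.exp (-z)) (Real.exp (-x) * (-1)) x :=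
      (hasDerivAt_neg x).exp
    have h := (hasDerivAt_id x).fun_mul hexp
    refine h.congr_deriv ?_
    simp
    ring
  refine monotoneOn_of_deriv_nonneg (convex_Icc 0 1)
    (fun x _ => (hder x).continuousAt.continuousWithinAt)
    (fun x _ => (hder x).differentiableAt.differentiableWithinAt)
    (fun x hx => ?_)
  rw [interior_Icc] at hx
  rw [(hder x).deriv]
  have := Real.exp_pos (-x)
  nlinarith [hx.1, hx.2]


/-- Posterior variance update: `ν̂(V,Λ) = V/(1+V·Λ)`. -/
noncomputable def nuhat (V Lam : ℝ) : ℝ := V / (1 + V * Lam)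

/-- the rescaled ζ-derivative `g` of the decentralized myopic
cost is strictly increasing on `(0,1)`. -/
theorem stmt_18 (SA th lam V : ℝ) (hSA : 0 < SA) (hth : 0 ≤ th)
    (hlam : 0 < lam) (hV0 : 0 < V) (hV1 : V ≤ 1)
    (B : ℕ) (hB : 1 ≤ B) (SM : ℝ) (hSM : 0 ≤ SM) :
    StrictMonoOn
      (fun zeta : ℝ =>
        (∑ r ∈ Finset.range (B + 1),
          (B.choose r : ℝ) * (zeta * Real.exp (-zeta)) ^ r *
            (1 - zeta * Real.exp (-zeta)) ^ (B - r) *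
            nuhat V ((r : ℝ) * SA * SM / (SA + SM)) *
            (((r : ℝ) - (zeta * Real.exp (-zeta)) * (B : ℝ)) /
              ((zeta * Real.exp (-zeta)) * (1 - zeta * Real.exp (-zeta))))) +
        lam * (B : ℝ) * (Real.exp zeta / (1 - zeta)) * (1 + th * SM))
      (Set.Ioo 0 1) := by
  obtain ⟨m, rfl⟩ : ∃ m, B = m + 1 := ⟨B - 1, by omega⟩
  have hSAM : (0:ℝ) < SA + SM := by linarith
  have hc : (0:ℝ) ≤ SA * SM / (SA + SM) := by positivity
  -- the payoff sequence and its convexity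
  have hav : ∀ r : ℕ, nuhat V ((r : ℝ) * SA * SM / (SA + SM))
      = V / (1 + V * ((r : ℝ) * (SA * SM / (SA + SM)))) := by
    intro r
    rw [nuhat, show (r : ℝ) * SA * SM / (SA + SM) = (r : ℝ) * (SA * SM / (SA + SM)) from by ring]
  have hD : ∀ k : ℕ, (0:ℝ) < 1 + V * ((k : ℝ) * (SA * SM / (SA + SM))) := by
    intro k
    have : (0:ℝ) ≤ V * ((k : ℝ) * (SA * SM / (SA + SM))) :=
      mul_nonneg hV0.le (mul_nonneg (Nat.cast_nonneg k) hc)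
    linarith
  have hconv : ∀ r : ℕ,
      nuhat V (((r+1 : ℕ) : ℝ) * SA * SM / (SA + SM)) - nuhat V ((r : ℝ) * SA * SM / (SA + SM))
        ≤ nuhat V (((r+2 : ℕ) : ℝ) * SA * SM / (SA + SM))
            - nuhat V (((r+1 : ℕ) : ℝ) * SA * SM / (SA + SM)) := by
    intro r
    rw [hav r, hav (r+1), hav (r+2)]
    have d0 := hD r
    have d1 := hD (r+1)
    have d2 := hD (r+2)
    rw [div_sub_div _ _ (ne_of_gt d1) (ne_of_gt d0), div_sub_div _ _ (ne_of_gt d2) (ne_of_gt d1),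
      div_le_div_iff₀ (by positivity) (by positivity)]
    have key : (0:ℝ) ≤ V^3 * (SA * SM / (SA + SM))^2 *
        (1 + V * (((r:ℝ)+1) * (SA * SM / (SA + SM)))) := by positivity
    push_cast at d0 d1 d2 ⊢
    nlinarith [key]
  intro x hx y hy hxy
  simp only [Set.mem_Ioo] at hx hy
  obtain ⟨hx0, hx1⟩ := hx
  obtain ⟨hy0, hy1⟩ := hy
  have hex : (0:ℝ) < Real.exp (-x) := Real.exp_pos _
  have hey : (0:ℝ) < Real.exp (-y) := Real.exp_pos _
  have hpx0 : 0 < x * Real.exp (-x) := mul_pos hx0 hex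
  have hpy0 : 0 < y * Real.exp (-y) := mul_pos hy0 hey
  have helx : Real.exp (-x) < 1 := Real.exp_lt_one_iff.2 (by linarith)
  have hely : Real.exp (-y) < 1 := Real.exp_lt_one_iff.2 (by linarith)
  have hpx1 : x * Real.exp (-x) < 1 := by nlinarith
  have hpy1 : y * Real.exp (-y) < 1 := by nlinarith
  dsimp only
  have hsx := sum_eq m (fun r : ℕ => nuhat V ((r : ℝ) * SA * SM / (SA + SM)))
    (x * Real.exp (-x)) (ne_of_gt hpx0) (ne_of_gt (by linarith : (0:ℝ) < 1 - x * Real.exp (-x)))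
  have hsy := sum_eq m (fun r : ℕ => nuhat V ((r : ℝ) * SA * SM / (SA + SM)))
    (y * Real.exp (-y)) (ne_of_gt hpy0) (ne_of_gt (by linarith : (0:ℝ) < 1 - y * Real.exp (-y)))
  rw [hsx, hsy]
  have hmono := bern_mono m
    (fun r : ℕ => nuhat V (((r+1 : ℕ) : ℝ) * SA * SM / (SA + SM))
      - nuhat V ((r : ℝ) * SA * SM / (SA + SM))) (fun r => hconv r)
  have hple : x * Real.exp (-x) ≤ y * Real.exp (-y) :=
    rho_mono ⟨hx0.le, hx1.le⟩ ⟨hy0.le, hy1.le⟩ hxy.le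
  have hGle := hmono ⟨hpx0.le, hpx1.le⟩ ⟨hpy0.le, hpy1.le⟩ hple
  refine add_lt_add_of_le_of_lt ?_ ?_
  · exact mul_le_mul_of_nonneg_left hGle (by positivity)
  · have hfrac : Real.exp x / (1 - x) < Real.exp y / (1 - y) := by
      rw [div_lt_div_iff₀ (by linarith) (by linarith)]
      nlinarith [mul_pos (sub_pos.2 (Real.exp_lt_exp.2 hxy)) (show (0:ℝ) < 1 - y by linarith),
        mul_pos (Real.exp_pos y) (sub_pos.2 hxy)]
    have h1ts : (0:ℝ) < 1 + th * SM := by nlinarith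
    have hco : (0:ℝ) < lam * ((m + 1 : ℕ) : ℝ) := by positivity
    exact mul_lt_mul_of_pos_right (mul_lt_mul_of_pos_left hfrac hco) h1ts
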